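/- Let α ∈ (0,1) ∪ (1,2), let ρ and σ be quantum states on ℂ^d with supp(ρ) = supp(σ), and let m ≥ 1, t₁,…,t_m ∈ [0,1], w₁,…,w_m > 0 be such that h_m(x) := 1 + (sin(απ)/π)·Σ_{j=1}^m w_j f_{t_j}(x) satisfies: h_m(x) ≥ x^{1−α} for all x > 0 if α ∈ (0,1), and h_m(x) ≤ x^{1−α} for all x > 0 if α ∈ (1,2). Suppose real numbers D̂₁,…,D̂_m satisfy D̂_j ≥ D_{f_{t_j}}(ρ‖σ) for every j, and set Q̂ := 1 + (sin(απ)/π)·Σ_{j=1}^m w_j·D̂_j. If Q̂ > 0, then (1/(α−1))·log₂ Q̂ ≤ D_α(ρ‖σ); that is, the estimate is a rigorous lower bound on the Petz Rényi divergence. -/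

import Mathlib

noncomputable section

namespace QRE

open scoped ComplexOrder

open Matrix

variable {d : ℕ}

/-- The rank-one projector `|u⟩⟨u|` associated with a vector `u ∈ ℂ^d`. -/
def rankOne (u : EuclideanSpace ℂ (Fin d)) : Matrix (Fin d) (Fin d) ℂ :=
  Matrix.of fun i j => u i * (starRingEnd ℂ) (u j)

/-- Functional calculus on the support of a Hermitian matrix: apply `g` to the
positive eigenvalues, and `0` to the rest. -/
def matFun (g : ℝ → ℝ) {A : Matrix (Fin d) (Fin d) ℂ} (hA : A.IsHermitian) :
    Matrix (Fin d) (Fin d) ℂ :=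
  ∑ j, (if 0 < hA.eigenvalues j then (g (hA.eigenvalues j) : ℂ) else 0) •
    rankOne (hA.eigenvectorBasis j)

/-- The orthogonal projection onto the support (column space) of a Hermitian matrix. -/
def suppProj {A : Matrix (Fin d) (Fin d) ℂ} (hA : A.IsHermitian) :
    Matrix (Fin d) (Fin d) ℂ :=
  matFun (fun _ => 1) hA

/-- The standard quantum `f`-divergence (for `supp ρ ⊆ supp σ`, where the `f(0⁺)` term
vanishes): `D_f(ρ‖σ) = Σ_{j : η_j > 0} Σ_{k : μ_k > 0} η_j f(μ_k/η_j) tr[P_j Q_k]`. -/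
def Df (f : ℝ → ℝ) {ρ σ : Matrix (Fin d) (Fin d) ℂ}
    (hρ : ρ.IsHermitian) (hσ : σ.IsHermitian) : ℝ :=
  ∑ j, ∑ k,
    if 0 < hρ.eigenvalues j ∧ 0 < hσ.eigenvalues k then
      hρ.eigenvalues j * f (hσ.eigenvalues k / hρ.eigenvalues j) *
        (Matrix.trace (rankOne (hρ.eigenvectorBasis j) *
          rankOne (hσ.eigenvectorBasis k))).re
    else 0

/-- `f_t(x) = (x-1)/(t(x-1)+1)`. -/
def ft (t x : ℝ) : ℝ := (x - 1) / (t * (x - 1) + 1)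

/-- A quantum state: positive semidefinite with unit trace. -/
def IsState (ρ : Matrix (Fin d) (Fin d) ℂ) : Prop := ρ.PosSemidef ∧ ρ.trace = 1

/-- The Umegaki relative entropy `tr[ρ (log₂ ρ − log₂ σ)]` (logs on the supports). -/
def relEnt {ρ σ : Matrix (Fin d) (Fin d) ℂ} (hρ : ρ.IsHermitian) (hσ : σ.IsHermitian) : ℝ :=
  (Matrix.trace (ρ * (matFun (Real.logb 2) hρ - matFun (Real.logb 2) hσ))).re

/-- `Q_α(ρ‖σ) = tr[ρ^α σ^{1-α}]`, matrix powers by functional calculus on the support. -/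
def Qalpha (α : ℝ) {ρ σ : Matrix (Fin d) (Fin d) ℂ}
    (hρ : ρ.IsHermitian) (hσ : σ.IsHermitian) : ℝ :=
  (Matrix.trace (matFun (fun y => y ^ α) hρ * matFun (fun y => y ^ (1 - α)) hσ)).re

/-- `Q₀(ρ‖σ) = tr[ρ⁰ σ]`. -/
def Qzero {ρ : Matrix (Fin d) (Fin d) ℂ} (hρ : ρ.IsHermitian)
    (σ : Matrix (Fin d) (Fin d) ℂ) : ℝ :=
  (Matrix.trace (suppProj hρ * σ)).re

/-- `Q₂(ρ‖σ) = tr[ρ² σ⁺]`, with `σ⁺` the Moore–Penrose pseudo-inverse of `σ`. -/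
def Qtwo (ρ : Matrix (Fin d) (Fin d) ℂ) {σ : Matrix (Fin d) (Fin d) ℂ}
    (hσ : σ.IsHermitian) : ℝ :=
  (Matrix.trace (ρ * ρ * matFun (fun y => y⁻¹) hσ)).re

variable {ρ σ : Matrix (Fin d) (Fin d) ℂ}

lemma trace_rankOne_mul (u v : EuclideanSpace ℂ (Fin d)) :
    Matrix.trace (rankOne u * rankOne v) = ((‖(inner ℂ u v : ℂ)‖ ^ 2 : ℝ) : ℂ) := by
  have h1 : (inner ℂ u v : ℂ) = ∑ i, (starRingEnd ℂ) (u i) * v i := by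
    simp [PiLp.inner_apply, RCLike.inner_apply, mul_comm]
  have h2 : (starRingEnd ℂ) (inner ℂ u v : ℂ) = ∑ i, u i * (starRingEnd ℂ) (v i) := by
    rw [h1, map_sum]; simp [mul_comm]
  calc Matrix.trace (rankOne u * rankOne v)
      = ∑ i, ∑ l, (u i * (starRingEnd ℂ) (u l)) * (v l * (starRingEnd ℂ) (v i)) := by
        simp [Matrix.trace, Matrix.diag, Matrix.mul_apply, rankOne]
    _ = (∑ l, (starRingEnd ℂ) (u l) * v l) * (∑ i, u i * (starRingEnd ℂ) (v i)) := by
        rw [Finset.sum_mul_sum, Finset.sum_comm]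
        exact Finset.sum_congr rfl fun i _ => Finset.sum_congr rfl fun l _ => by ring
    _ = (inner ℂ u v : ℂ) * (starRingEnd ℂ) (inner ℂ u v : ℂ) := by rw [h2, h1]
    _ = ((‖(inner ℂ u v : ℂ)‖ ^ 2 : ℝ) : ℂ) := by
        rw [Complex.mul_conj, Complex.normSq_eq_norm_sq]

variable {ρ σ : Matrix (Fin d) (Fin d) ℂ}

/-- The weight `|⟨u_j, v_k⟩|²`. -/
def csq (hρ : ρ.IsHermitian) (hσ : σ.IsHermitian) (j k : Fin d) : ℝ :=
  ‖(inner ℂ (hρ.eigenvectorBasis j) (hσ.eigenvectorBasis k) : ℂ)‖ ^ 2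

lemma csq_nonneg (hρ : ρ.IsHermitian) (hσ : σ.IsHermitian) (j k : Fin d) :
    0 ≤ csq hρ hσ j k := sq_nonneg _

/-- The master sum. -/
def Ssum (hρ : ρ.IsHermitian) (hσ : σ.IsHermitian) (g : ℝ → ℝ) : ℝ :=
  ∑ j, ∑ k, if 0 < hρ.eigenvalues j ∧ 0 < hσ.eigenvalues k then
    hρ.eigenvalues j * g (hσ.eigenvalues k / hρ.eigenvalues j) * csq hρ hσ j k
  else 0

lemma sum_csq (hρ : ρ.IsHermitian) (hσ : σ.IsHermitian) (j : Fin d) :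
    ∑ k, csq hρ hσ j k = 1 := by
  have h := hσ.eigenvectorBasis.sum_inner_mul_inner (hρ.eigenvectorBasis j)
    (hρ.eigenvectorBasis j)
  have h2 : ∀ k, (inner ℂ (hρ.eigenvectorBasis j) (hσ.eigenvectorBasis k) : ℂ) *
      (inner ℂ (hσ.eigenvectorBasis k) (hρ.eigenvectorBasis j) : ℂ)
      = ((csq hρ hσ j k : ℝ) : ℂ) := by
    intro k
    rw [← inner_conj_symm (hρ.eigenvectorBasis j) (hσ.eigenvectorBasis k),
      mul_comm, Complex.mul_conj, Complex.normSq_eq_norm_sq,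
      norm_inner_symm]
    rfl
  have h3 : (inner ℂ (hρ.eigenvectorBasis j) (hρ.eigenvectorBasis j) : ℂ) = 1 := by
    rw [inner_self_eq_norm_sq_to_K, hρ.eigenvectorBasis.orthonormal.1 j]
    norm_num
  rw [h3] at h
  simp only [h2] at h
  have : ((∑ k, csq hρ hσ j k : ℝ) : ℂ) = 1 := by push_cast [h]; rfl
  exact_mod_cast this

lemma inner_eig_zero (hρP : ρ.PosSemidef) (hσP : σ.PosSemidef)
    (hsupp : LinearMap.range ρ.mulVecLin = LinearMap.range σ.mulVecLin)
    {j k : Fin d} (hj : 0 < hρP.1.eigenvalues j) (hk : ¬ 0 < hσP.1.eigenvalues k) :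
    (inner ℂ (hρP.1.eigenvectorBasis j) (hσP.1.eigenvectorBasis k) : ℂ) = 0 := by
  have hμ : hσP.1.eigenvalues k = 0 :=
    le_antisymm (not_lt.mp hk) (hσP.eigenvalues_nonneg k)
  obtain ⟨x, hx⟩ : (⇑(hρP.1.eigenvectorBasis j) : Fin d → ℂ) ∈
      LinearMap.range σ.mulVecLin := by
    rw [← hsupp]
    refine ⟨((hρP.1.eigenvalues j : ℂ))⁻¹ • ⇑(hρP.1.eigenvectorBasis j), ?_⟩
    rw [Matrix.mulVecLin_apply, Matrix.mulVec_smul, hρP.1.mulVec_eigenvectorBasis]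
    have hsm : (hρP.1.eigenvalues j) • (⇑(hρP.1.eigenvectorBasis j) : Fin d → ℂ)
        = ((hρP.1.eigenvalues j : ℂ)) • ⇑(hρP.1.eigenvectorBasis j) := by
      funext i; simp [Complex.real_smul]
    rw [hsm, smul_smul, inv_mul_cancel₀ (by exact_mod_cast ne_of_gt hj), one_smul]
  have hv0 : σ *ᵥ (⇑(hσP.1.eigenvectorBasis k) : Fin d → ℂ) = 0 := by
    rw [hσP.1.mulVec_eigenvectorBasis, hμ]; simp
  have hvm : star (⇑(hσP.1.eigenvectorBasis k) : Fin d → ℂ) ᵥ* σ = 0 := by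
    have := congrArg star hv0
    rwa [Matrix.star_mulVec, hσP.1.eq, star_zero] at this
  have hkj : (inner ℂ (hσP.1.eigenvectorBasis k) (hρP.1.eigenvectorBasis j) : ℂ) = 0 := by
    rw [EuclideanSpace.inner_eq_star_dotProduct, dotProduct_comm]
    show star (⇑(hσP.1.eigenvectorBasis k) : Fin d → ℂ) ⬝ᵥ ⇑(hρP.1.eigenvectorBasis j) = 0
    rw [← hx, Matrix.mulVecLin_apply, dotProduct_mulVec, hvm, zero_dotProduct]
  rw [← inner_conj_symm, hkj, map_zero]

lemma trace_matFun_mul (g g' : ℝ → ℝ) (hρH : ρ.IsHermitian) (hσH : σ.IsHermitian) :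
    (Matrix.trace (matFun g hρH * matFun g' hσH)).re =
      ∑ j, ∑ k, (if 0 < hρH.eigenvalues j then g (hρH.eigenvalues j) else 0) *
        (if 0 < hσH.eigenvalues k then g' (hσH.eigenvalues k) else 0) * csq hρH hσH j k := by
  rw [matFun, matFun, Finset.sum_mul_sum]
  rw [Matrix.trace_sum]
  simp only [Matrix.trace_sum, smul_mul_smul_comm, Matrix.trace_smul, trace_rankOne_mul]
  rw [Complex.re_sum]
  refine Finset.sum_congr rfl fun j _ => ?_
  rw [Complex.re_sum]
  refine Finset.sum_congr rfl fun k _ => ?_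
  simp only [smul_eq_mul, apply_ite Complex.ofReal]
  push_cast
  by_cases h1 : 0 < hρH.eigenvalues j <;> by_cases h2 : 0 < hσH.eigenvalues k <;>
    simp [h1, h2, csq, ← Complex.ofReal_pow]

lemma sum_eigenvalues_eq_trace (hH : ρ.IsHermitian) :
    ∑ j, (hH.eigenvalues j : ℂ) = ρ.trace := by
  conv_rhs => rw [hH.spectral_theorem]
  rw [Unitary.conjStarAlgAut_apply, Matrix.trace_mul_comm, ← Matrix.mul_assoc, Unitary.coe_star_mul_self, Matrix.one_mul,
    Matrix.trace_diagonal]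
  rfl

lemma Ssum_mono (hρH : ρ.IsHermitian) (hσH : σ.IsHermitian) {g g' : ℝ → ℝ}
    (h : ∀ x > (0:ℝ), g x ≤ g' x) : Ssum hρH hσH g ≤ Ssum hρH hσH g' := by
  refine Finset.sum_le_sum fun j _ => Finset.sum_le_sum fun k _ => ?_
  by_cases hp : 0 < hρH.eigenvalues j ∧ 0 < hσH.eigenvalues k
  · simp only [if_pos hp]
    exact mul_le_mul_of_nonneg_right
      (mul_le_mul_of_nonneg_left (h _ (div_pos hp.2 hp.1)) hp.1.le) (csq_nonneg _ _ _ _)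
  · simp [hp]

lemma Ssum_one (hρP : ρ.PosSemidef) (hσP : σ.PosSemidef)
    (hsupp : LinearMap.range ρ.mulVecLin = LinearMap.range σ.mulVecLin)
    (hρtr : ρ.trace = 1) : Ssum hρP.1 hσP.1 (fun _ => 1) = 1 := by
  unfold Ssum
  have hη : ∑ j, hρP.1.eigenvalues j = 1 := by
    have h := sum_eigenvalues_eq_trace hρP.1
    rw [hρtr] at h
    exact_mod_cast h
  calc ∑ j, ∑ k, (if 0 < hρP.1.eigenvalues j ∧ 0 < hσP.1.eigenvalues k then
        hρP.1.eigenvalues j * (1:ℝ) * csq hρP.1 hσP.1 j k else 0)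
      = ∑ j, hρP.1.eigenvalues j := by
        refine Finset.sum_congr rfl fun j _ => ?_
        by_cases hj : 0 < hρP.1.eigenvalues j
        · have : ∀ k, (if 0 < hρP.1.eigenvalues j ∧ 0 < hσP.1.eigenvalues k then
              hρP.1.eigenvalues j * (1:ℝ) * csq hρP.1 hσP.1 j k else 0)
              = hρP.1.eigenvalues j * csq hρP.1 hσP.1 j k := by
            intro k
            by_cases hk : 0 < hσP.1.eigenvalues k
            · simp [hj, hk]
            · rw [if_neg (by tauto)]
              have : csq hρP.1 hσP.1 j k = 0 := by
                rw [csq, inner_eig_zero hρP hσP hsupp hj hk]; simp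
              rw [this, mul_zero]
          rw [Finset.sum_congr rfl fun k _ => this k, ← Finset.mul_sum,
            sum_csq hρP.1 hσP.1 j, mul_one]
        · have hj0 : hρP.1.eigenvalues j = 0 :=
            le_antisymm (not_lt.mp hj) (hρP.eigenvalues_nonneg j)
          simp [hj, hj0]
    _ = 1 := hη

lemma Ssum_combo {m : ℕ} (e : ℝ) (w : Fin m → ℝ) (F : Fin m → ℝ → ℝ)
    (hρH : ρ.IsHermitian) (hσH : σ.IsHermitian) :
    Ssum hρH hσH (fun x => 1 + e * ∑ j', w j' * F j' x)
      = Ssum hρH hσH (fun _ => 1) + e * ∑ j', w j' * Ssum hρH hσH (F j') := by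
  unfold Ssum
  have hterm : ∀ j k,
      (if 0 < hρH.eigenvalues j ∧ 0 < hσH.eigenvalues k then
        hρH.eigenvalues j *
          (1 + e * ∑ j', w j' * F j' (hσH.eigenvalues k / hρH.eigenvalues j)) *
          csq hρH hσH j k
       else 0)
      = (if 0 < hρH.eigenvalues j ∧ 0 < hσH.eigenvalues k then
          hρH.eigenvalues j * (1:ℝ) * csq hρH hσH j k else 0)
        + ∑ j', e * (w j' *
          (if 0 < hρH.eigenvalues j ∧ 0 < hσH.eigenvalues k then
            hρH.eigenvalues j * F j' (hσH.eigenvalues k / hρH.eigenvalues j) *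
              csq hρH hσH j k else 0)) := by
    intro j k
    by_cases hp : 0 < hρH.eigenvalues j ∧ 0 < hσH.eigenvalues k
    · simp only [if_pos hp, mul_add, add_mul, mul_one, Finset.mul_sum, Finset.sum_mul]
      congr 1
      exact Finset.sum_congr rfl fun j' _ => by ring
    · simp [hp]
  simp only [hterm, Finset.sum_add_distrib]
  congr 1
  simp only [Finset.mul_sum]
  refine Eq.trans (Finset.sum_congr rfl fun j _ => Finset.sum_comm) ?_
  exact Finset.sum_comm

lemma Ssum_nonneg (hρH : ρ.IsHermitian) (hσH : σ.IsHermitian) {g : ℝ → ℝ}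
    (hg : ∀ x > (0:ℝ), 0 ≤ g x) : 0 ≤ Ssum hρH hσH g := by
  refine Finset.sum_nonneg fun j _ => Finset.sum_nonneg fun k _ => ?_
  by_cases hp : 0 < hρH.eigenvalues j ∧ 0 < hσH.eigenvalues k
  · rw [if_pos hp]
    exact mul_nonneg (mul_nonneg hp.1.le (hg _ (div_pos hp.2 hp.1))) (csq_nonneg _ _ _ _)
  · rw [if_neg hp]

lemma Ssum_pos (hρP : ρ.PosSemidef) (hσP : σ.PosSemidef)
    (hsupp : LinearMap.range ρ.mulVecLin = LinearMap.range σ.mulVecLin)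
    (hρtr : ρ.trace = 1) {g : ℝ → ℝ} (hg : ∀ x > (0:ℝ), 0 < g x) :
    0 < Ssum hρP.1 hσP.1 g := by
  rcases lt_or_eq_of_le (Ssum_nonneg hρP.1 hσP.1 fun x hx => (hg x hx).le) with h | h
  · exact h
  exfalso
  have hall : ∀ j k, (if 0 < hρP.1.eigenvalues j ∧ 0 < hσP.1.eigenvalues k then
      hρP.1.eigenvalues j * g (hσP.1.eigenvalues k / hρP.1.eigenvalues j) *
        csq hρP.1 hσP.1 j k else 0) = 0 := by
    have hnn : ∀ j ∈ Finset.univ, (0:ℝ) ≤ ∑ k, (if 0 < hρP.1.eigenvalues j ∧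
        0 < hσP.1.eigenvalues k then hρP.1.eigenvalues j *
          g (hσP.1.eigenvalues k / hρP.1.eigenvalues j) * csq hρP.1 hσP.1 j k else 0) := by
      intro j _
      refine Finset.sum_nonneg fun k _ => ?_
      by_cases hp : 0 < hρP.1.eigenvalues j ∧ 0 < hσP.1.eigenvalues k
      · rw [if_pos hp]
        exact mul_nonneg (mul_nonneg hp.1.le (hg _ (div_pos hp.2 hp.1)).le)
          (csq_nonneg _ _ _ _)
      · rw [if_neg hp]
    intro j k
    have hj := (Finset.sum_eq_zero_iff_of_nonneg hnn).mp h.symm j (Finset.mem_univ j)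
    have hnn2 : ∀ k ∈ Finset.univ, (0:ℝ) ≤ (if 0 < hρP.1.eigenvalues j ∧
        0 < hσP.1.eigenvalues k then hρP.1.eigenvalues j *
          g (hσP.1.eigenvalues k / hρP.1.eigenvalues j) * csq hρP.1 hσP.1 j k else 0) := by
      intro k _
      by_cases hp : 0 < hρP.1.eigenvalues j ∧ 0 < hσP.1.eigenvalues k
      · rw [if_pos hp]
        exact mul_nonneg (mul_nonneg hp.1.le (hg _ (div_pos hp.2 hp.1)).le)
          (csq_nonneg _ _ _ _)
      · rw [if_neg hp]
    exact (Finset.sum_eq_zero_iff_of_nonneg hnn2).mp hj k (Finset.mem_univ k)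
  have hone : Ssum hρP.1 hσP.1 (fun _ => 1) = 0 := by
    unfold Ssum
    refine Finset.sum_eq_zero fun j _ => Finset.sum_eq_zero fun k _ => ?_
    by_cases hp : 0 < hρP.1.eigenvalues j ∧ 0 < hσP.1.eigenvalues k
    · rw [if_pos hp]
      have := hall j k
      rw [if_pos hp] at this
      have hcz : csq hρP.1 hσP.1 j k = 0 := by
        rcases mul_eq_zero.mp this with h1 | h1
        · rcases mul_eq_zero.mp h1 with h2 | h2
          · exact absurd h2 (ne_of_gt hp.1)
          · exact absurd h2 (ne_of_gt (hg _ (div_pos hp.2 hp.1)))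
        · exact h1
      rw [hcz, mul_zero]
    · exact if_neg hp
  rw [Ssum_one hρP hσP hsupp hρtr] at hone
  exact one_ne_zero hone

lemma Df_eq_Ssum (f : ℝ → ℝ) (hρH : ρ.IsHermitian) (hσH : σ.IsHermitian) :
    Df f hρH hσH = Ssum hρH hσH f := by
  unfold Df Ssum csq
  refine Finset.sum_congr rfl fun j _ => Finset.sum_congr rfl fun k _ => ?_
  rw [trace_rankOne_mul, Complex.ofReal_re]

lemma rpow_split {a b α : ℝ} (ha : 0 < a) (hb : 0 < b) :
    a ^ α * b ^ (1 - α) = a * (b / a) ^ (1 - α) := by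
  have h2 : a ^ α * a ^ (1 - α) = a := by
    rw [← Real.rpow_add ha]; norm_num
  have hne : a ^ (1 - α) ≠ 0 := ne_of_gt (Real.rpow_pos_of_pos ha _)
  have h3 : a / a ^ (1 - α) = a ^ α := by rw [div_eq_iff hne]; exact h2.symm
  calc a ^ α * b ^ (1 - α) = a / a ^ (1 - α) * b ^ (1 - α) := by rw [h3]
    _ = a * (b / a) ^ (1 - α) := by rw [Real.div_rpow hb.le ha.le]; ring

lemma Qalpha_eq (α : ℝ) (hρH : ρ.IsHermitian) (hσH : σ.IsHermitian) :
    Qalpha α hρH hσH = Ssum hρH hσH (fun x => x ^ (1 - α)) := by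
  rw [Qalpha, trace_matFun_mul]
  unfold Ssum
  refine Finset.sum_congr rfl fun j _ => Finset.sum_congr rfl fun k _ => ?_
  by_cases h1 : 0 < hρH.eigenvalues j <;> by_cases h2 : 0 < hσH.eigenvalues k <;>
    simp only [h1, h2, if_true, if_false, and_true, and_false, true_and, false_and,
      if_pos, zero_mul, mul_zero, ite_true, ite_false]
  rw [rpow_split h1 h2]


/-- Rigorous lower bound on the Petz Rényi divergence: under one-sided quadrature
bounds on `x^{1−α}` and overestimates `D̂_j` of the `f_{t_j}`-divergences, the
estimate `(1/(α−1)) log₂ Q̂` lower-bounds `D_α(ρ‖σ) = (1/(α−1)) log₂ Q_α(ρ‖σ)`. -/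
theorem lower_bound_petz_renyi (α : ℝ)
    (hα : α ∈ Set.Ioo (0 : ℝ) 1 ∪ Set.Ioo (1 : ℝ) 2)
    (ρ σ : Matrix (Fin d) (Fin d) ℂ) (hρ : IsState ρ) (hσ : IsState σ)
    (hsupp : LinearMap.range ρ.mulVecLin = LinearMap.range σ.mulVecLin)
    (m : ℕ) (hm : 1 ≤ m) (t w : Fin m → ℝ)
    (ht : ∀ j, t j ∈ Set.Icc (0 : ℝ) 1) (hw : ∀ j, 0 < w j)
    (happrox :
      (α < 1 → ∀ x > (0 : ℝ), x ^ (1 - α) ≤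
        1 + (Real.sin (α * Real.pi) / Real.pi) * ∑ j, w j * ft (t j) x) ∧
      (1 < α → ∀ x > (0 : ℝ),
        1 + (Real.sin (α * Real.pi) / Real.pi) * ∑ j, w j * ft (t j) x ≤
          x ^ (1 - α)))
    (Dhat : Fin m → ℝ)
    (hest : ∀ j, Df (ft (t j)) hρ.1.1 hσ.1.1 ≤ Dhat j)
    (hQhat : 0 < 1 + (Real.sin (α * Real.pi) / Real.pi) * ∑ j, w j * Dhat j) :
    (1 / (α - 1)) *
        Real.logb 2 (1 + (Real.sin (α * Real.pi) / Real.pi) * ∑ j, w j * Dhat j) ≤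
      (1 / (α - 1)) * Real.logb 2 (Qalpha α hρ.1.1 hσ.1.1) := by
  have hρH : ρ.IsHermitian := hρ.1.1
  have hσH : σ.IsHermitian := hσ.1.1
  set c := Real.sin (α * Real.pi) / Real.pi with hc
  have hcombo : 1 + c * ∑ j, w j * Df (ft (t j)) hρ.1.1 hσ.1.1
      = Ssum hρ.1.1 hσ.1.1 (fun x => 1 + c * ∑ j, w j * ft (t j) x) := by
    rw [Ssum_combo c w (fun j => ft (t j)) hρ.1.1 hσ.1.1,
      Ssum_one hρ.1 hσ.1 hsupp hρ.2]
    congr 2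
    exact Finset.sum_congr rfl fun j _ => by rw [Df_eq_Ssum]
  have hsum_le : ∑ j, w j * Df (ft (t j)) hρ.1.1 hσ.1.1 ≤ ∑ j, w j * Dhat j :=
    Finset.sum_le_sum fun j _ => mul_le_mul_of_nonneg_left (hest j) (hw j).le
  have hQpos : 0 < Qalpha α hρ.1.1 hσ.1.1 := by
    rw [Qalpha_eq]
    exact Ssum_pos hρ.1 hσ.1 hsupp hρ.2 fun x hx => Real.rpow_pos_of_pos hx _
  rcases hα with hα | hα
  · -- α ∈ (0,1)
    obtain ⟨h0, h1⟩ := hα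
    have hsin : 0 < Real.sin (α * Real.pi) :=
      Real.sin_pos_of_pos_of_lt_pi (mul_pos h0 Real.pi_pos)
        (by nlinarith [Real.pi_pos])
    have hcpos : 0 < c := div_pos hsin Real.pi_pos
    have hQle : Qalpha α hρ.1.1 hσ.1.1 ≤ 1 + c * ∑ j, w j * Dhat j := by
      calc Qalpha α hρ.1.1 hσ.1.1
          = Ssum hρ.1.1 hσ.1.1 (fun x => x ^ (1 - α)) := Qalpha_eq α hρ.1.1 hσ.1.1
        _ ≤ Ssum hρ.1.1 hσ.1.1 (fun x => 1 + c * ∑ j, w j * ft (t j) x) :=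
            Ssum_mono hρ.1.1 hσ.1.1 (happrox.1 h1)
        _ = 1 + c * ∑ j, w j * Df (ft (t j)) hρ.1.1 hσ.1.1 := hcombo.symm
        _ ≤ 1 + c * ∑ j, w j * Dhat j :=
            add_le_add_right (mul_le_mul_of_nonneg_left hsum_le hcpos.le) 1
    have hlog : Real.logb 2 (Qalpha α hρ.1.1 hσ.1.1)
        ≤ Real.logb 2 (1 + c * ∑ j, w j * Dhat j) :=
      Real.logb_le_logb_of_le one_lt_two hQpos hQle
    have hfac : (1 / (α - 1) : ℝ) ≤ 0 := by
      apply div_nonpos_of_nonneg_of_nonpos <;> linarith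
    exact mul_le_mul_of_nonpos_left hlog hfac
  · -- α ∈ (1,2)
    obtain ⟨h1, h2⟩ := hα
    have hsin : Real.sin (α * Real.pi) < 0 := by
      have h := Real.sin_sub_pi (α * Real.pi)
      have hpos : 0 < Real.sin (α * Real.pi - Real.pi) :=
        Real.sin_pos_of_pos_of_lt_pi (by nlinarith [Real.pi_pos])
          (by nlinarith [Real.pi_pos])
      linarith [h ▸ hpos]
    have hcneg : c < 0 := div_neg_of_neg_of_pos hsin Real.pi_pos
    have hQle : 1 + c * ∑ j, w j * Dhat j ≤ Qalpha α hρ.1.1 hσ.1.1 := by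
      calc 1 + c * ∑ j, w j * Dhat j
          ≤ 1 + c * ∑ j, w j * Df (ft (t j)) hρ.1.1 hσ.1.1 :=
            add_le_add_right (mul_le_mul_of_nonpos_left hsum_le hcneg.le) 1
        _ = Ssum hρ.1.1 hσ.1.1 (fun x => 1 + c * ∑ j, w j * ft (t j) x) := hcombo
        _ ≤ Ssum hρ.1.1 hσ.1.1 (fun x => x ^ (1 - α)) :=
            Ssum_mono hρ.1.1 hσ.1.1 (happrox.2 h1)
        _ = Qalpha α hρ.1.1 hσ.1.1 := (Qalpha_eq α hρ.1.1 hσ.1.1).symm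
    have hlog : Real.logb 2 (1 + c * ∑ j, w j * Dhat j)
        ≤ Real.logb 2 (Qalpha α hρ.1.1 hσ.1.1) :=
      Real.logb_le_logb_of_le one_lt_two hQhat hQle
    have hfac : (0:ℝ) ≤ 1 / (α - 1) := by apply le_of_lt; apply div_pos one_pos; linarith
    exact mul_le_mul_of_nonneg_left hlog hfac

end QRE
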